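/- Let d ≥ 0 and c_0, …, c_d ∈ ℤ, and let f(x) = x^{d+1} − c_d x^d − ⋯ − c_1 x − c_0. Suppose f is irreducible over ℚ, f has a real root λ > 1, and every complex root μ of f with μ ≠ λ satisfies |μ| ≤ 1. Let (a_n)_{n=0}^∞ be a sequence of integers satisfying a_{n+1} = c_d a_n + c_{d−1} a_{n−1} + ⋯ + c_0 a_{n−d} for all n ≥ d, and let A = {a_n : n ∈ ℕ}. If A is infinite, then either A or −A = {−a : a ∈ A} is geometrically sparse. -/

import Mathlib

open Filter Pointwise

/-- The `k`-fold sumset `X + ⋯ + X` (`k` times) of a set of integers. -/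
def kFold (X : Set ℤ) (k : ℕ) : Set ℤ :=
  {z : ℤ | ∃ f : Fin k → ℤ, (∀ i, f i ∈ X) ∧ z = ∑ i, f i}

/-- `Σ_n(X) = ⋃_{k=1}^n k(X)`. -/
def sigmaSum (n : ℕ) (X : Set ℤ) : Set ℤ :=
  ⋃ k ∈ Finset.Icc 1 n, kFold X k

/-- `±A = {x ∈ ℤ : |x| ∈ A}`. -/
def pmSet (A : Set ℤ) : Set ℤ := {x : ℤ | |x| ∈ A}

/-- The lower asymptotic density of a set of naturals:
`liminf_{n → ∞} |A ∩ {1,…,n}| / n`. -/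
noncomputable def lowerDensity (A : Set ℕ) : ℝ :=
  Filter.liminf (fun n : ℕ => (Set.ncard (A ∩ Set.Icc 1 n) : ℝ) / n) Filter.atTop

/-- The set of naturals whose image in `ℤ` lies in `S`. -/
def intSetToNat (S : Set ℤ) : Set ℕ := {n : ℕ | (n : ℤ) ∈ S}

/-- `A ⊆ ℤ` is sufficiently sparse if `δ̲(Σ_n(±A) ∩ ℕ) = 0` for all `n ≥ 1`. -/
def SuffSparse (A : Set ℤ) : Prop :=
  ∀ n : ℕ, 1 ≤ n → lowerDensity (intSetToNat (sigmaSum n (pmSet A))) = 0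

/-- A set `S` of (positive) reals is geometric if `{s/t : s, t ∈ S, t ≤ s}` is a closed
and discrete subset of `ℝ`. -/
def IsGeometric (S : Set ℝ) : Prop :=
  IsClosed {x : ℝ | ∃ s ∈ S, ∃ t ∈ S, t ≤ s ∧ x = s / t} ∧
    DiscreteTopology {x : ℝ | ∃ s ∈ S, ∃ t ∈ S, t ≤ s ∧ x = s / t}

/-- `A ⊆ ℤ` is geometrically sparse if there is `f : A → ℝ⁺` with `f(A)` geometric and
`sup_{a ∈ A} |a − f(a)| < ∞`. -/
def GeomSparse (A : Set ℤ) : Prop :=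
  ∃ f : ℤ → ℝ, (∀ a ∈ A, 0 < f a) ∧ IsGeometric (f '' A) ∧
    ∃ C : ℝ, ∀ a ∈ A, |(a : ℝ) - f a| ≤ C


lemma closed_discrete_of_sep {T : Set ℝ} {ε : ℝ} (hε : 0 < ε)
    (hsep : ∀ x ∈ T, ∀ y ∈ T, x ≠ y → ε ≤ |x - y|) :
    IsClosed T ∧ DiscreteTopology T := by
  rw [← isDiscrete_iff_discreteTopology, isClosed_and_discrete_iff]
  intro x
  rw [disjoint_principal_right]
  by_cases h : ∃ t ∈ T, t ≠ x ∧ |t - x| < ε / 2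
  · obtain ⟨t, htT, htx, hlt⟩ := h
    have hd : 0 < |t - x| := abs_pos.mpr (sub_ne_zero.mpr htx)
    rw [Metric.mem_nhdsWithin_iff]
    refine ⟨min (ε/2) |t - x|, by positivity, ?_⟩
    rintro y ⟨hy1, hy2⟩ hyT
    simp only [Metric.mem_ball, Real.dist_eq] at hy1
    have hyx : y ≠ x := hy2
    have hyt : y ≠ t := by
      intro h; subst h
      exact absurd hy1 (by simp [lt_min_iff])
    have : ε ≤ |y - t| := hsep y hyT t htT hyt
    have : |y - t| ≤ |y - x| + |t - x| := by
      have := abs_sub_abs_le_abs_sub y t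
      calc |y - t| = |(y - x) - (t - x)| := by ring_nf
        _ ≤ |y - x| + |t - x| := abs_sub _ _
    nlinarith [lt_of_lt_of_le hy1 (min_le_left _ _), hlt]
  · push_neg at h
    rw [Metric.mem_nhdsWithin_iff]
    refine ⟨ε/2, by positivity, ?_⟩
    rintro y ⟨hy1, hy2⟩ hyT
    simp only [Metric.mem_ball, Real.dist_eq] at hy1
    exact absurd hy1 (not_lt.mpr (h y hyT hy2))

lemma sep_of_powers {lam : ℝ} (hlam : 1 < lam) {T : Set ℝ}
    (hT : ∀ x ∈ T, ∃ k : ℕ, x = lam ^ k) :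
    IsClosed T ∧ DiscreteTopology T := by
  apply closed_discrete_of_sep (ε := lam - 1) (by linarith)
  intro x hx y hy hxy
  obtain ⟨j, rfl⟩ := hT x hx
  obtain ⟨k, rfl⟩ := hT y hy
  have hjk : j ≠ k := fun h => hxy (by rw [h])
  have hlam0 : (0:ℝ) < lam := by linarith
  wlog h : k < j generalizing j k
  · rw [abs_sub_comm]
    exact this k hy j hx (fun h' => hxy h'.symm) hjk.symm ((hjk.lt_or_gt).resolve_right h)
  · have h1 : lam ^ (k+1) ≤ lam ^ j := pow_le_pow_right₀ (le_of_lt hlam) h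
    have h2 : (1:ℝ) ≤ lam ^ k := one_le_pow₀ (le_of_lt hlam)
    have hthis : lam ^ (k+1) = lam ^ k * lam := pow_succ _ _
    have h4 : lam ^ k ≤ lam ^ (k+1) := by nlinarith
    rw [abs_of_nonneg (by linarith : (0:ℝ) ≤ lam ^ j - lam ^ k)]
    nlinarith

lemma geomSparse_of_approx {lam r C : ℝ} (hlam : 1 < lam) (hr : 0 < r)
    (b : ℕ → ℤ) (hb : ∀ n, |(b n : ℝ) - r * lam ^ n| ≤ C) :
    GeomSparse (Set.range b) := by
  classical
  refine ⟨fun x => r * lam ^ (Function.invFun b x), ?_, ?_, C, ?_⟩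
  · intro x _
    have : (0:ℝ) < lam := by linarith
    positivity
  · apply sep_of_powers hlam
    rintro x ⟨s, ⟨u, -, rfl⟩, t, ⟨v, -, rfl⟩, hts, rfl⟩
    simp only at hts ⊢
    set m := Function.invFun b u with hm
    set n := Function.invFun b v with hn
    have hlam0 : (0:ℝ) < lam := by linarith
    have hle : lam ^ n ≤ lam ^ m := le_of_mul_le_mul_left hts hr
    have hnm : n ≤ m := (pow_le_pow_iff_right₀ hlam).mp hle
    refine ⟨m - n, ?_⟩
    rw [mul_div_mul_left _ _ (ne_of_gt hr), pow_sub₀ _ (ne_of_gt hlam0) hnm, div_eq_mul_inv]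
  · intro x hx
    have h1 : b (Function.invFun b x) = x := Function.invFun_eq hx
    simp only
    calc |(x:ℝ) - r * lam ^ (Function.invFun b x)| 
        = |((b (Function.invFun b x) : ℤ) : ℝ) - r * lam ^ (Function.invFun b x)| := by rw [h1]
      _ ≤ C := hb _


lemma exists_approx (d : ℕ) (c : Fin (d + 1) → ℤ) (f : Polynomial ℤ)
    (hf : f = Polynomial.X ^ (d + 1) -
      ∑ i : Fin (d + 1), Polynomial.C (c i) * Polynomial.X ^ (i : ℕ))
    (hirr : Irreducible (f.map (Int.castRingHom ℚ)))
    (lam : ℝ) (hlam : 1 < lam) (hroot : Polynomial.aeval lam f = 0)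
    (hroots : ∀ μ : ℂ, Polynomial.aeval μ f = 0 → μ ≠ (lam : ℂ) → ‖μ‖ ≤ 1)
    (a : ℕ → ℤ)
    (hrec : ∀ n : ℕ, d ≤ n → a (n + 1) = ∑ i : Fin (d + 1), c i * a (n - d + i)) :
    ∃ r C : ℝ, 0 ≤ C ∧ ∀ n : ℕ, |(a n : ℝ) - r * lam ^ n| ≤ C := by
  classical
  -- f is monic of degree d + 1
  have hmonic : f.Monic := by
    rw [hf]
    apply Polynomial.monic_X_pow_sub
    apply lt_of_le_of_lt (Polynomial.degree_sum_le _ _)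
    rw [Finset.sup_lt_iff (by exact_mod_cast WithBot.bot_lt_coe (d+1))]
    intro i _
    apply lt_of_le_of_lt (Polynomial.degree_C_mul_X_pow_le _ _)
    exact_mod_cast WithBot.coe_lt_coe.mpr (by omega : (i:ℕ) < d + 1)
  have hgdeg : (∑ i : Fin (d + 1), Polynomial.C (c i) * Polynomial.X ^ (i : ℕ) : Polynomial ℤ).degree
      < ((d + 1 : ℕ) : WithBot ℕ) := by
    apply lt_of_le_of_lt (Polynomial.degree_sum_le _ _)
    rw [Finset.sup_lt_iff (by exact_mod_cast WithBot.bot_lt_coe (d+1))]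
    intro i _
    apply lt_of_le_of_lt (Polynomial.degree_C_mul_X_pow_le _ _)
    exact_mod_cast WithBot.coe_lt_coe.mpr (by omega : (i:ℕ) < d + 1)
  have hdeg : f.degree = ((d + 1 : ℕ) : WithBot ℕ) := by
    rw [hf, Polynomial.degree_sub_eq_left_of_degree_lt, Polynomial.degree_X_pow]
    rw [Polynomial.degree_X_pow]
    exact hgdeg
  have hndeg : f.natDegree = d + 1 := Polynomial.natDegree_eq_of_degree_eq_some hdeg
  set p : Polynomial ℂ := f.map (Int.castRingHom ℂ) with hp
  have hpmonic : p.Monic := hmonic.map _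
  have hpne : p ≠ 0 := hpmonic.ne_zero
  have hpdeg : p.natDegree = d + 1 := by rw [hp, Polynomial.natDegree_map_eq_of_injective (Int.cast_injective), hndeg]
  -- separability
  have hsep : p.Separable := by
    have h1 : (f.map (Int.castRingHom ℚ)).Separable := hirr.separable
    have h2 : p = (f.map (Int.castRingHom ℚ)).map (algebraMap ℚ ℂ) := by
      rw [hp, Polynomial.map_map]
      congr 1
    rw [h2]; exact h1.map
  have hnodup : p.roots.Nodup := Polynomial.nodup_roots hsep
  have hcard : Multiset.card p.roots = d + 1 := by
    rw [← hpdeg]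
    exact (Polynomial.splits_iff_card_roots.mp (IsAlgClosed.splits p))
  -- enumerate the roots
  set L := p.roots.toList with hL
  have hlen : L.length = d + 1 := by rw [hL, Multiset.length_toList, hcard]
  have hLnodup : L.Nodup := by
    rw [hL]
    have h := hnodup
    rw [← Multiset.coe_toList p.roots] at h
    exact Multiset.coe_nodup.mp h
  set μ : Fin (d + 1) → ℂ := fun i => L.get (Fin.cast hlen.symm i) with hμ
  have hinj : Function.Injective μ := by
    intro i j hij
    have := (List.nodup_iff_injective_get.mp hLnodup) hij
    simpa [Fin.ext_iff] using this
  have hmem : ∀ i, μ i ∈ p.roots := fun i => by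
    rw [hμ]
    exact (Multiset.mem_toList).mp (List.get_mem L _)
  have hsurj : ∀ z ∈ p.roots, ∃ i, μ i = z := by
    intro z hz
    have : z ∈ L := (Multiset.mem_toList).mpr hz
    obtain ⟨k, hk⟩ := List.get_of_mem this
    exact ⟨Fin.cast hlen k, by rw [hμ]; simpa using hk⟩
  -- roots satisfy the recurrence equation
  have haev : ∀ z ∈ p.roots, Polynomial.aeval z f = 0 := by
    intro z hz
    have := Polynomial.isRoot_of_mem_roots hz
    rwa [Polynomial.IsRoot, hp, Polynomial.eval_map, ← algebraMap_int_eq, ← Polynomial.aeval_def] at this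
  have hrootEq : ∀ z ∈ p.roots, z ^ (d + 1) = ∑ i : Fin (d + 1), (c i : ℂ) * z ^ (i : ℕ) := by
    intro z hz
    have h0 := haev z hz
    rw [hf] at h0
    simp only [map_sub, map_pow, Polynomial.aeval_X, map_sum, map_mul, Polynomial.aeval_C] at h0
    have := sub_eq_zero.mp h0
    simpa using this
  -- lam is a root
  have hlamroot : ((lam : ℂ)) ∈ p.roots := by
    rw [Polynomial.mem_roots hpne]
    rw [Polynomial.IsRoot, hp, Polynomial.eval_map, ← algebraMap_int_eq, ← Polynomial.aeval_def]
    have : (Polynomial.aeval ((lam:ℂ)) f) = ((Polynomial.aeval lam f : ℝ) : ℂ) :=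
      Polynomial.aeval_algHom_apply (Complex.ofRealHom.toIntAlgHom) lam f
    rw [this, hroot]; simp
  obtain ⟨j0, hj0⟩ := hsurj _ hlamroot
  -- Vandermonde system
  set V : Matrix (Fin (d+1)) (Fin (d+1)) ℂ := (Matrix.vandermonde μ).transpose with hV
  have hdet : V.det ≠ 0 := by
    rw [hV, Matrix.det_transpose]
    exact Matrix.det_vandermonde_ne_zero_iff.mpr hinj
  set cvec : Fin (d+1) → ℂ := V⁻¹.mulVec (fun i : Fin (d+1) => ((a i : ℤ) : ℂ)) with hcvec
  have hVc : V.mulVec cvec = fun i : Fin (d+1) => ((a i : ℤ) : ℂ) := by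
    rw [hcvec, Matrix.mulVec_mulVec, Matrix.mul_nonsing_inv _ (isUnit_iff_ne_zero.mpr hdet), Matrix.one_mulVec]
  have hinit : ∀ i : Fin (d+1), ((a i : ℂ)) = ∑ j, cvec j * μ j ^ (i : ℕ) := by
    intro i
    have := congrFun hVc i
    rw [Matrix.mulVec, dotProduct] at this
    rw [← this]
    apply Finset.sum_congr rfl
    intro j _
    rw [hV]
    simp [Matrix.vandermonde, mul_comm]
  -- the general solution
  have key : ∀ n : ℕ, ((a n : ℂ)) = ∑ j, cvec j * μ j ^ n := by
    intro n
    induction n using Nat.strong_induction_on with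
    | _ n ih =>
      rcases le_or_gt n d with hn | hn
      · have := hinit ⟨n, Nat.lt_succ_of_le hn⟩
        simpa using this
      · obtain ⟨m, rfl⟩ : ∃ m, n = m + 1 := ⟨n - 1, by omega⟩
        have hdm : d ≤ m := by omega
        have h1 : ((a (m+1) : ℂ)) = ∑ i : Fin (d+1), (c i : ℂ) * ((a (m - d + i) : ℤ) : ℂ) := by
          rw [hrec m hdm]; push_cast; ring
        have h2 : ∀ i : Fin (d+1), ((a (m - d + (i:ℕ)) : ℂ)) = ∑ j, cvec j * μ j ^ (m - d + (i:ℕ)) :=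
          fun i => ih _ (by omega)
        have h4 : ∑ i : Fin (d+1), (c i : ℂ) * ((a (m - d + i) : ℤ) : ℂ)
            = ∑ j, ∑ i : Fin (d+1), (c i : ℂ) * (cvec j * μ j ^ (m - d + (i:ℕ))) := by
          rw [Finset.sum_comm]
          apply Finset.sum_congr rfl
          intro i _
          rw [h2 i, Finset.mul_sum]
        have h3 : ∀ j, ∑ i : Fin (d+1), (c i : ℂ) * (cvec j * μ j ^ (m - d + (i:ℕ)))
            = cvec j * μ j ^ (m+1) := by
          intro j
          have hstep : ∑ i : Fin (d+1), (c i : ℂ) * (cvec j * μ j ^ (m - d + (i:ℕ)))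
              = (cvec j * μ j ^ (m - d)) * ∑ i : Fin (d+1), (c i : ℂ) * μ j ^ (i:ℕ) := by
            rw [Finset.mul_sum]
            apply Finset.sum_congr rfl
            intro i _
            rw [pow_add]; ring
          rw [hstep, ← hrootEq (μ j) (hmem j), mul_assoc, ← pow_add]
          congr 2
          omega
        rw [h1, h4]
        exact Finset.sum_congr rfl (fun j _ => h3 j)
  -- conclusion
  refine ⟨(cvec j0).re, ∑ j ∈ Finset.univ.erase j0, ‖cvec j‖,
    Finset.sum_nonneg (fun j _ => (norm_nonneg _)), ?_⟩
  intro n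
  have h5 : ((a n : ℂ)) - cvec j0 * (lam:ℂ)^n = ∑ j ∈ Finset.univ.erase j0, cvec j * μ j ^ n := by
    rw [key n, ← hj0, ← Finset.sum_erase_add Finset.univ _ (Finset.mem_univ j0)]
    ring
  have h6 : ‖((a n : ℂ)) - cvec j0 * (lam:ℂ)^n‖
      ≤ ∑ j ∈ Finset.univ.erase j0, ‖cvec j‖ := by
    rw [h5]
    refine le_trans (norm_sum_le _ _) (Finset.sum_le_sum ?_)
    intro j hj
    rw [norm_mul, norm_pow]
    have hne : μ j ≠ (lam:ℂ) := by
      rw [← hj0]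
      exact fun h => (Finset.mem_erase.mp hj).1 (hinj h)
    have hle1 : ‖μ j‖ ≤ 1 := hroots (μ j) (haev _ (hmem j)) hne
    calc ‖cvec j‖ * ‖μ j‖ ^ n
        ≤ ‖cvec j‖ * 1 := by
          gcongr
          exact pow_le_one₀ (norm_nonneg _) hle1
      _ = ‖cvec j‖ := mul_one _
  have hre : (((a n : ℂ)) - cvec j0 * (lam:ℂ)^n).re = (a n : ℝ) - (cvec j0).re * lam ^ n := by
    rw [Complex.sub_re]
    simp [Complex.mul_re, ← Complex.ofReal_pow]
  calc |(a n : ℝ) - (cvec j0).re * lam ^ n|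
      = |(((a n : ℂ)) - cvec j0 * (lam:ℂ)^n).re| := by rw [hre]
    _ ≤ ‖((a n : ℂ)) - cvec j0 * (lam:ℂ)^n‖ := Complex.abs_re_le_norm _
    _ ≤ _ := h6

/-- Let `f(x) = x^{d+1} − c_d x^d − ⋯ − c_0` be irreducible over `ℚ`, with a real
root `λ > 1` such that every other complex root `μ` satisfies `|μ| ≤ 1`. If `(a_n)` is an
integer sequence satisfying the recurrence `a_{n+1} = c_d a_n + ⋯ + c_0 a_{n−d}` for `n ≥ d`
and `A = {a_n : n ∈ ℕ}` is infinite, then `A` or `−A` is geometrically sparse. -/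
theorem geomSparse_of_pisot_salem_recurrence (d : ℕ) (c : Fin (d + 1) → ℤ)
    (f : Polynomial ℤ)
    (hf : f = Polynomial.X ^ (d + 1) -
      ∑ i : Fin (d + 1), Polynomial.C (c i) * Polynomial.X ^ (i : ℕ))
    (hirr : Irreducible (f.map (Int.castRingHom ℚ)))
    (lam : ℝ) (hlam : 1 < lam) (hroot : Polynomial.aeval lam f = 0)
    (hroots : ∀ μ : ℂ, Polynomial.aeval μ f = 0 → μ ≠ (lam : ℂ) → ‖μ‖ ≤ 1)
    (a : ℕ → ℤ)
    (hrec : ∀ n : ℕ, d ≤ n → a (n + 1) = ∑ i : Fin (d + 1), c i * a (n - d + i))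
    (hinf : (Set.range a).Infinite) :
    GeomSparse (Set.range a) ∨ GeomSparse (-(Set.range a)) := by
  obtain ⟨r, C, hC, happrox⟩ := exists_approx d c f hf hirr lam hlam hroot hroots a hrec
  have hr0 : r ≠ 0 := by
    intro hr
    subst hr
    apply hinf
    apply Set.Finite.subset (Set.finite_Icc (-(⌈C⌉)) ⌈C⌉)
    rintro x ⟨n, rfl⟩
    have h1 := happrox n
    rw [zero_mul, sub_zero] at h1
    have h2 : |(a n : ℝ)| ≤ (⌈C⌉ : ℝ) := h1.trans (Int.le_ceil C)
    rw [← Int.cast_abs, Int.cast_le] at h2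
    rw [Set.mem_Icc]
    exact abs_le.mp h2
  rcases hr0.lt_or_gt with hr | hr
  · right
    have hb : ∀ n : ℕ, |(((-(a n) : ℤ)) : ℝ) - (-r) * lam ^ n| ≤ C := by
      intro n
      have := happrox n
      rw [← abs_neg] at this
      convert this using 2
      push_cast
      ring
    have := geomSparse_of_approx hlam (neg_pos.mpr hr) (fun n => -(a n)) hb
    convert this using 2
    ext x
    simp only [Set.mem_neg, Set.mem_range]
    constructor
    · rintro ⟨n, hn⟩
      exact ⟨n, by omega⟩
    · rintro ⟨n, hn⟩
      exact ⟨n, by omega⟩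
  · left
    exact geomSparse_of_approx hlam hr a happrox
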